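/- Let P be a finite pure poset with no antichain of size 3, in which some maximal chain has cardinality at least 3, and such that no element of P is comparable to all others. Then P admits a linear extension with at least 3 descents. -/

import Mathlib

open scoped Classical

/-- `π` is a linear extension of the (strict, compatibly labeled) partial order `r`
on `{ξ_1, …, ξ_d}`: whenever `ξ_{π a} < ξ_{π b}` in the poset, `a < b`. -/
def IsLinExt {d : ℕ} (r : Fin d → Fin d → Prop) (π : Equiv.Perm (Fin d)) : Prop :=
  ∀ a b : Fin d, r (π a) (π b) → a < b

/-- The number of descents of the permutation `π = π 0, π 1, …, π (d-1)`:
positions `j` with `π j > π (j+1)`. -/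
noncomputable def descents {d : ℕ} (π : Equiv.Perm (Fin d)) : ℕ :=
  (Finset.univ.filter fun j : Fin d =>
    ∃ hj : (j : ℕ) + 1 < d, π ⟨(j : ℕ) + 1, hj⟩ < π j).card

/-- `A` is an antichain (clutter) of the strict order `r`. -/
def IsAntichain' {d : ℕ} (r : Fin d → Fin d → Prop) (A : Finset (Fin d)) : Prop :=
  ∀ a ∈ A, ∀ b ∈ A, a ≠ b → ¬ r a b ∧ ¬ r b a

/-- `S` is a maximal chain of the strict order `r`. -/
def IsMaxChain' {d : ℕ} (r : Fin d → Fin d → Prop) (S : Set (Fin d)) : Prop :=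
  (∀ a ∈ S, ∀ b ∈ S, a ≠ b → r a b ∨ r b a) ∧
  ∀ T : Set (Fin d), (∀ a ∈ T, ∀ b ∈ T, a ≠ b → r a b ∨ r b a) → S ⊆ T → S = T

/-- The poset is pure: all maximal chains have the same cardinality. -/
def IsPure' {d : ℕ} (r : Fin d → Fin d → Prop) : Prop :=
  ∀ S T : Set (Fin d), IsMaxChain' r S → IsMaxChain' r T → S.ncard = T.ncard

/-- No element is comparable to all other elements (the lattice `J(P)` is simple). -/
def IsSimple' {d : ℕ} (r : Fin d → Fin d → Prop) : Prop :=
  ∀ x : Fin d, ∃ y : Fin d, y ≠ x ∧ ¬ r x y ∧ ¬ r y x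


namespace Stmt10Aux

variable {d : ℕ}

/-- Chains (as finsets) having `x` as top element. -/
noncomputable def topChains (r : Fin d → Fin d → Prop) (x : Fin d) :
    Finset (Finset (Fin d)) :=
  Finset.univ.powerset.filter fun C => x ∈ C ∧ (∀ a ∈ C, a = x ∨ r a x) ∧
    ∀ a ∈ C, ∀ b ∈ C, a ≠ b → r a b ∨ r b a

/-- Height of `x`: size of the longest chain with top `x`. -/
noncomputable def ht (r : Fin d → Fin d → Prop) (x : Fin d) : ℕ :=
  (topChains r x).sup Finset.card

lemma singleton_mem_topChains (r : Fin d → Fin d → Prop) (x : Fin d) :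
    {x} ∈ topChains r x := by
  simp [topChains]

lemma one_le_ht (r : Fin d → Fin d → Prop) (x : Fin d) : 1 ≤ ht r x := by
  have := Finset.le_sup (f := Finset.card) (singleton_mem_topChains r x)
  simpa [ht] using this

lemma exists_topChain (r : Fin d → Fin d → Prop) (x : Fin d) :
    ∃ C ∈ topChains r x, C.card = ht r x := by
  obtain ⟨C, hC, hCc⟩ := Finset.exists_mem_eq_sup (topChains r x)
    ⟨{x}, singleton_mem_topChains r x⟩ Finset.card
  exact ⟨C, hC, hCc.symm⟩

variable {r : Fin d → Fin d → Prop}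
  (htrans : ∀ a b c : Fin d, r a b → r b c → r a c)
  (hcompat : ∀ a b : Fin d, r a b → a < b)
  (hpure : IsPure' r)

include hcompat in
lemma irrefl' (a : Fin d) : ¬ r a a := fun h => lt_irrefl a (hcompat a a h)

include htrans hcompat in
lemma asymm' {a b : Fin d} (h : r a b) : ¬ r b a :=
  fun h' => irrefl' hcompat a (htrans a b a h h')

include htrans hcompat in
lemma ht_lt {u v : Fin d} (h : r u v) : ht r u < ht r v := by
  obtain ⟨C, hC, hCc⟩ := exists_topChain r u
  simp only [topChains, Finset.mem_filter, Finset.mem_powerset] at hC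
  obtain ⟨-, huC, hbel, hchain⟩ := hC
  have hvC : v ∉ C := by
    intro hv
    rcases hbel v hv with rfl | hvu
    · exact irrefl' hcompat v h
    · exact asymm' htrans hcompat h hvu
  have hmem : insert v C ∈ topChains r v := by
    simp only [topChains, Finset.mem_filter, Finset.mem_powerset]
    refine ⟨Finset.subset_univ _, Finset.mem_insert_self _ _, ?_, ?_⟩
    · intro a ha
      rcases Finset.mem_insert.mp ha with rfl | haC
      · exact Or.inl rfl
      · rcases hbel a haC with rfl | hau
        · exact Or.inr h
        · exact Or.inr (htrans a u v hau h)
    · intro a ha b hb hab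
      rcases Finset.mem_insert.mp ha with rfl | haC <;>
        rcases Finset.mem_insert.mp hb with rfl | hbC
      · exact absurd rfl hab
      · rcases hbel b hbC with rfl | hbu
        · exact Or.inr h
        · exact Or.inr (htrans b u a hbu h)
      · rcases hbel a haC with rfl | hau
        · exact Or.inl h
        · exact Or.inl (htrans a u b hau h)
      · exact hchain a haC b hbC hab
  have := Finset.le_sup (f := Finset.card) hmem
  have hcard : (insert v C).card = C.card + 1 := Finset.card_insert_of_notMem hvC
  simp only [ht] at *
  omega

include htrans hcompat in
lemma not_r_of_ht_eq {u v : Fin d} (h : ht r u = ht r v) : ¬ r u v :=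
  fun hr => by have := ht_lt htrans hcompat hr; omega

/-- Every finite chain extends to a maximal chain. -/
lemma exists_maxChain (C0 : Finset (Fin d))
    (hC0 : ∀ a ∈ C0, ∀ b ∈ C0, a ≠ b → r a b ∨ r b a) :
    ∃ M : Finset (Fin d), C0 ⊆ M ∧ IsMaxChain' r ↑M := by
  classical
  set F : Finset (Finset (Fin d)) := Finset.univ.powerset.filter
    (fun C => C0 ⊆ C ∧ ∀ a ∈ C, ∀ b ∈ C, a ≠ b → r a b ∨ r b a) with hF
  have hC0F : C0 ∈ F := by
    simp only [hF, Finset.mem_filter, Finset.mem_powerset]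
    exact ⟨Finset.subset_univ _, le_refl _, hC0⟩
  obtain ⟨M, hMF, hmax⟩ := F.exists_max_image Finset.card ⟨C0, hC0F⟩
  simp only [hF, Finset.mem_filter, Finset.mem_powerset] at hMF
  obtain ⟨-, hC0M, hMchain⟩ := hMF
  refine ⟨M, hC0M, ?_, ?_⟩
  · intro a ha b hb hab
    exact hMchain a (Finset.mem_coe.mp ha) b (Finset.mem_coe.mp hb) hab
  · intro T hT hsub
    have hTfin : T.Finite := Set.toFinite T
    set T' := hTfin.toFinset with hT'
    have hMT' : M ⊆ T' := by
      intro a ha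
      exact hTfin.mem_toFinset.mpr (hsub (Finset.mem_coe.mpr ha))
    have hT'F : T' ∈ F := by
      simp only [hF, Finset.mem_filter, Finset.mem_powerset]
      refine ⟨Finset.subset_univ _, hC0M.trans hMT', ?_⟩
      intro a ha b hb hab
      exact hT a (hTfin.mem_toFinset.mp ha) b (hTfin.mem_toFinset.mp hb) hab
    have : M = T' := Finset.eq_of_subset_of_card_le hMT' (hmax T' hT'F)
    ext x
    rw [Finset.mem_coe, this, hTfin.mem_toFinset]



include htrans hcompat hpure in
/-- In a pure poset, for `x` in a maximal chain `M`, the part of `M` at or below `x`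
has exactly `ht r x` elements. -/
lemma card_below_eq_ht {M : Set (Fin d)} (hM : IsMaxChain' r M) {x : Fin d}
    (hx : x ∈ M) :
    ((Set.toFinite M).toFinset.filter fun y => y = x ∨ r y x).card = ht r x := by
  classical
  set Mf := (Set.toFinite M).toFinset with hMf
  have hmemMf : ∀ y, y ∈ Mf ↔ y ∈ M := fun y => (Set.toFinite M).mem_toFinset
  have hxMf : x ∈ Mf := (hmemMf x).mpr hx
  set L := Mf.filter (fun y => y = x ∨ r y x) with hL
  set U := Mf.filter (fun y => r x y) with hU
  -- L is a chain with top x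
  have hLmem : L ∈ topChains r x := by
    simp only [topChains, Finset.mem_filter, Finset.mem_powerset]
    refine ⟨Finset.subset_univ _, ?_, ?_, ?_⟩
    · exact Finset.mem_filter.mpr ⟨hxMf, Or.inl rfl⟩
    · intro a ha; exact (Finset.mem_filter.mp ha).2
    · intro a ha b hb hab
      exact hM.1 a ((hmemMf a).mp (Finset.mem_filter.mp ha).1)
        b ((hmemMf b).mp (Finset.mem_filter.mp hb).1) hab
  have hle : L.card ≤ ht r x := Finset.le_sup (f := Finset.card) hLmem
  -- partition of Mf into L and U
  have hdisjLU : Disjoint L U := by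
    rw [Finset.disjoint_left]
    intro a haL haU
    have h1 := (Finset.mem_filter.mp haL).2
    have h2 := (Finset.mem_filter.mp haU).2
    rcases h1 with rfl | h1
    · exact irrefl' hcompat a h2
    · exact asymm' htrans hcompat h1 h2
  have hLU : L ∪ U = Mf := by
    apply Finset.Subset.antisymm
    · exact Finset.union_subset (Finset.filter_subset _ _) (Finset.filter_subset _ _)
    · intro a ha
      rcases eq_or_ne a x with rfl | hax
      · exact Finset.mem_union_left _ (Finset.mem_filter.mpr ⟨ha, Or.inl rfl⟩)
      · rcases hM.1 a ((hmemMf a).mp ha) x hx hax with h | h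
        · exact Finset.mem_union_left _ (Finset.mem_filter.mpr ⟨ha, Or.inr h⟩)
        · exact Finset.mem_union_right _ (Finset.mem_filter.mpr ⟨ha, h⟩)
  have hcardMf : Mf.card = L.card + U.card := by
    rw [← hLU, Finset.card_union_of_disjoint hdisjLU]
  -- build a long chain through x and the part of M above x
  obtain ⟨C, hC, hCcard⟩ := exists_topChain r x
  simp only [topChains, Finset.mem_filter, Finset.mem_powerset] at hC
  obtain ⟨-, hxC, hCbel, hCchain⟩ := hC
  have hdisjCU : Disjoint C U := by
    rw [Finset.disjoint_left]
    intro a haC haU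
    have h2 := (Finset.mem_filter.mp haU).2
    rcases hCbel a haC with rfl | h1
    · exact irrefl' hcompat a h2
    · exact asymm' htrans hcompat h1 h2
  have hchainCU : ∀ a ∈ C ∪ U, ∀ b ∈ C ∪ U, a ≠ b → r a b ∨ r b a := by
    intro a ha b hb hab
    rcases Finset.mem_union.mp ha with haC | haU <;>
      rcases Finset.mem_union.mp hb with hbC | hbU
    · exact hCchain a haC b hbC hab
    · rcases hCbel a haC with rfl | h1
      · exact Or.inl (Finset.mem_filter.mp hbU).2
      · exact Or.inl (htrans a x b h1 (Finset.mem_filter.mp hbU).2)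
    · rcases hCbel b hbC with rfl | h1
      · exact Or.inr (Finset.mem_filter.mp haU).2
      · exact Or.inr (htrans b x a h1 (Finset.mem_filter.mp haU).2)
    · exact hM.1 a ((hmemMf a).mp (Finset.mem_filter.mp haU).1)
        b ((hmemMf b).mp (Finset.mem_filter.mp hbU).1) hab
  obtain ⟨N, hCUN, hNmax⟩ := exists_maxChain (C ∪ U) hchainCU
  have hNM : (↑N : Set (Fin d)).ncard = M.ncard := hpure _ _ hNmax hM
  have hMncard : M.ncard = Mf.card := Set.ncard_eq_toFinset_card M (Set.toFinite M)
  have hNcard : (↑N : Set (Fin d)).ncard = N.card := Set.ncard_coe_finset N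
  have hCUcard : (C ∪ U).card = C.card + U.card := Finset.card_union_of_disjoint hdisjCU
  have hCUle : (C ∪ U).card ≤ N.card := Finset.card_le_card hCUN
  omega

include htrans hcompat hpure in
/-- In a pure poset, every maximal chain realizes every height `k ∈ [1, |M|]`. -/
lemma exists_ht_eq {M : Set (Fin d)} (hM : IsMaxChain' r M) {k : ℕ}
    (hk1 : 1 ≤ k) (hk2 : k ≤ M.ncard) : ∃ x ∈ M, ht r x = k := by
  classical
  set Mf := (Set.toFinite M).toFinset with hMf
  have hmemMf : ∀ y, y ∈ Mf ↔ y ∈ M := fun y => (Set.toFinite M).mem_toFinset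
  have hMncard : M.ncard = Mf.card := Set.ncard_eq_toFinset_card M (Set.toFinite M)
  have hsub : Mf.image (ht r) ⊆ Finset.Icc 1 Mf.card := by
    intro k hk
    obtain ⟨x, hxMf, rfl⟩ := Finset.mem_image.mp hk
    have h1 := card_below_eq_ht htrans hcompat hpure hM ((hmemMf x).mp hxMf)
    have h2 : (Mf.filter fun y => y = x ∨ r y x).card ≤ Mf.card :=
      Finset.card_le_card (Finset.filter_subset _ _)
    have := one_le_ht r x
    rw [Finset.mem_Icc]
    constructor
    · exact this
    · rw [← h1]; exact h2
  have hinj : Set.InjOn (ht r) ↑Mf := by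
    intro a ha b hb hab
    by_contra hne
    rcases hM.1 a ((hmemMf a).mp (Finset.mem_coe.mp ha))
      b ((hmemMf b).mp (Finset.mem_coe.mp hb)) hne with h | h
    · exact absurd hab (by have := ht_lt htrans hcompat h; omega)
    · exact absurd hab (by have := ht_lt htrans hcompat h; omega)
  have hcardim : (Mf.image (ht r)).card = Mf.card := Finset.card_image_of_injOn hinj
  have hcardIcc : (Finset.Icc 1 Mf.card).card = Mf.card := by
    rw [Nat.card_Icc]; omega
  have heq : Mf.image (ht r) = Finset.Icc 1 Mf.card :=
    Finset.eq_of_subset_of_card_le hsub (by omega)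
  have hkmem : k ∈ Mf.image (ht r) := by
    rw [heq, Finset.mem_Icc]; omega
  obtain ⟨x, hxMf, hx⟩ := Finset.mem_image.mp hkmem
  exact ⟨x, (hmemMf x).mp hxMf, hx⟩

end Stmt10Aux
/-- Position of `x` in the sorted order is the number of elements with smaller key. -/
lemma sort_position {d : ℕ} (K : Fin d → ℕ) (hK : Function.Injective K) (x : Fin d) :
    (((Tuple.sort K).symm x : Fin d) : ℕ) =
      (Finset.univ.filter fun y => K y < K x).card := by
  classical
  set σ := Tuple.sort K with hσ
  have hmono : Monotone (K ∘ σ) := Tuple.monotone_sort K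
  set j := σ.symm x with hj
  have hσj : σ j = x := σ.apply_symm_apply x
  have himg : Finset.univ.filter (fun y => K y < K x) = (Finset.Iio j).image σ := by
    ext y
    simp only [Finset.mem_filter, Finset.mem_univ, true_and, Finset.mem_image,
      Finset.mem_Iio]
    constructor
    · intro hy
      refine ⟨σ.symm y, ?_, σ.apply_symm_apply y⟩
      by_contra h
      push_neg at h
      have := hmono h
      simp only [Function.comp_apply, hσj, σ.apply_symm_apply] at this
      omega
    · rintro ⟨i, hij, rfl⟩
      have h1 : K (σ i) ≤ K (σ j) := hmono hij.le
      have h2 : K (σ i) ≠ K (σ j) := by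
        intro h
        exact absurd (σ.injective (hK h)) (ne_of_lt hij)
      rw [hσj] at h1 h2
      omega
  rw [himg, Finset.card_image_of_injective _ σ.injective, Fin.card_Iio]

set_option maxHeartbeats 1000000 in
/-- Let `P` be a finite pure poset with no antichain of size `3`, having a maximal
chain of cardinality at least `3`, and such that no element of `P` is comparable to
all others.  Then `P` admits a linear extension with at least three descents. -/
theorem stmt_10 {d : ℕ} (r : Fin d → Fin d → Prop)
    (htrans : ∀ a b c : Fin d, r a b → r b c → r a c)
    (hcompat : ∀ a b : Fin d, r a b → a < b)
    (hpure : IsPure' r) (hsimple : IsSimple' r)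
    (hno3 : ∀ A : Finset (Fin d), IsAntichain' r A → A.card ≤ 2)
    (S : Set (Fin d)) (hS : IsMaxChain' r S) (hS3 : 3 ≤ S.ncard) :
    ∃ π : Equiv.Perm (Fin d), IsLinExt r π ∧ 3 ≤ descents π := by
  classical
  -- pairs of elements at each height level
  have hpair : ∀ k : ℕ, 1 ≤ k → k ≤ S.ncard →
      ∃ a b : Fin d, b < a ∧ Stmt10Aux.ht r a = k ∧ Stmt10Aux.ht r b = k := by
    intro k hk1 hk2
    obtain ⟨x, hxS, hxk⟩ := Stmt10Aux.exists_ht_eq htrans hcompat hpure hS hk1 hk2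
    obtain ⟨y, hyx, hxy1, hxy2⟩ := hsimple x
    obtain ⟨N, hyN, hNmax⟩ := Stmt10Aux.exists_maxChain (r := r) {y} (by simp)
    have hNS : (↑N : Set (Fin d)).ncard = S.ncard := hpure _ _ hNmax hS
    obtain ⟨z, hzN, hzk⟩ := Stmt10Aux.exists_ht_eq htrans hcompat hpure hNmax hk1
      (by omega)
    have hyN' : y ∈ (↑N : Set (Fin d)) :=
      Finset.mem_coe.mpr (hyN (Finset.mem_singleton_self y))
    have hzx : z ≠ x := by
      rintro rfl
      rcases hNmax.1 z hzN y hyN' (Ne.symm hyx) with h | h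
      · exact hxy1 h
      · exact hxy2 h
    rcases lt_or_gt_of_ne hzx with h | h
    · exact ⟨x, z, h, hxk, hzk⟩
    · exact ⟨z, x, h, hzk, hxk⟩
  obtain ⟨A1, B1, hB1A1, htA1, htB1⟩ := hpair 1 (by omega) (by omega)
  obtain ⟨A2, B2, hB2A2, htA2, htB2⟩ := hpair 2 (by omega) (by omega)
  obtain ⟨A3, B3, hB3A3, htA3, htB3⟩ := hpair 3 (by omega) (by omega)
  -- distinctness
  have hne : ∀ u v : Fin d, Stmt10Aux.ht r u ≠ Stmt10Aux.ht r v → u ≠ v :=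
    fun u v h e => h (by rw [e])
  have hA1A2 : A1 ≠ A2 := hne _ _ (by omega)
  have hA1B2 : A1 ≠ B2 := hne _ _ (by omega)
  have hA1A3 : A1 ≠ A3 := hne _ _ (by omega)
  have hA1B3 : A1 ≠ B3 := hne _ _ (by omega)
  have hB1A2 : B1 ≠ A2 := hne _ _ (by omega)
  have hB1B2 : B1 ≠ B2 := hne _ _ (by omega)
  have hB1A3 : B1 ≠ A3 := hne _ _ (by omega)
  have hB1B3 : B1 ≠ B3 := hne _ _ (by omega)
  have hA2A3 : A2 ≠ A3 := hne _ _ (by omega)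
  have hA2B3 : A2 ≠ B3 := hne _ _ (by omega)
  have hB2A3 : B2 ≠ A3 := hne _ _ (by omega)
  have hB2B3 : B2 ≠ B3 := hne _ _ (by omega)
  -- each level k ≤ 3 is covered by the chosen pair
  have hcover : ∀ y : Fin d, Stmt10Aux.ht r y ≤ 3 →
      y = A1 ∨ y = B1 ∨ y = A2 ∨ y = B2 ∨ y = A3 ∨ y = B3 := by
    intro y hy
    have h1 := Stmt10Aux.one_le_ht r y
    have key : ∀ a b : Fin d, b < a → Stmt10Aux.ht r a = Stmt10Aux.ht r y →
        Stmt10Aux.ht r b = Stmt10Aux.ht r y → y = a ∨ y = b := by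
      intro a b hba ha hb
      by_contra hcon
      push_neg at hcon
      obtain ⟨hya, hyb⟩ := hcon
      have hsame : ∀ u ∈ ({y, a, b} : Finset (Fin d)),
          Stmt10Aux.ht r u = Stmt10Aux.ht r y := by
        intro u hu
        simp only [Finset.mem_insert, Finset.mem_singleton] at hu
        rcases hu with rfl | rfl | rfl
        · rfl
        · exact ha
        · exact hb
      have hanti : IsAntichain' r {y, a, b} := by
        intro u hu v hv huv
        have h1 := hsame u hu
        have h2 := hsame v hv
        exact ⟨Stmt10Aux.not_r_of_ht_eq htrans hcompat (by omega),
          Stmt10Aux.not_r_of_ht_eq htrans hcompat (by omega)⟩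
      have hcard : ({y, a, b} : Finset (Fin d)).card = 3 := by
        rw [Finset.card_insert_of_notMem (by simp [hya, hyb]),
          Finset.card_insert_of_notMem (by simp [hba.ne']),
          Finset.card_singleton]
      have := hno3 _ hanti
      omega
    have h3 : Stmt10Aux.ht r y = 1 ∨ Stmt10Aux.ht r y = 2 ∨ Stmt10Aux.ht r y = 3 := by
      omega
    rcases h3 with h3 | h3 | h3
    · rcases key A1 B1 hB1A1 (by omega) (by omega) with rfl | rfl
      · exact Or.inl rfl
      · exact Or.inr (Or.inl rfl)
    · rcases key A2 B2 hB2A2 (by omega) (by omega) with rfl | rfl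
      · exact Or.inr (Or.inr (Or.inl rfl))
      · exact Or.inr (Or.inr (Or.inr (Or.inl rfl)))
    · rcases key A3 B3 hB3A3 (by omega) (by omega) with rfl | rfl
      · exact Or.inr (Or.inr (Or.inr (Or.inr (Or.inl rfl))))
      · exact Or.inr (Or.inr (Or.inr (Or.inr (Or.inr rfl))))
  have hlev1 : ∀ y : Fin d, Stmt10Aux.ht r y = 1 → y = A1 ∨ y = B1 := by
    intro y hy
    rcases hcover y (by omega) with rfl | rfl | rfl | rfl | rfl | rfl
    · exact Or.inl rfl
    · exact Or.inr rfl
    all_goals omega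
  have hlev2 : ∀ y : Fin d, Stmt10Aux.ht r y = 2 → y = A2 ∨ y = B2 := by
    intro y hy
    rcases hcover y (by omega) with rfl | rfl | rfl | rfl | rfl | rfl
    · omega
    · omega
    · exact Or.inl rfl
    · exact Or.inr rfl
    all_goals omega
  have hlev3 : ∀ y : Fin d, Stmt10Aux.ht r y = 3 → y = A3 ∨ y = B3 := by
    intro y hy
    rcases hcover y (by omega) with rfl | rfl | rfl | rfl | rfl | rfl
    · omega
    · omega
    · omega
    · omega
    · exact Or.inl rfl
    · exact Or.inr rfl
  have hd2 : 2 ≤ d := by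
    have h := Fintype.one_lt_card_iff.mpr ⟨A1, B1, hB1A1.ne'⟩
    simp at h; omega
  -- the sorting key
  set T : Fin d → ℕ := fun x =>
    if x = A1 ∨ x = A2 ∨ x = A3 then 0
    else if x = B1 ∨ x = B2 ∨ x = B3 then 1 else (x : ℕ) with hT
  set K : Fin d → ℕ := fun x => d * Stmt10Aux.ht r x + T x with hK
  have hTlt : ∀ y : Fin d, T y < d := by
    intro y
    simp only [hT]
    split_ifs
    · omega
    · omega
    · exact y.isLt
  have hTA1 : T A1 = 0 := by simp [hT]
  have hTA2 : T A2 = 0 := by simp [hT]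
  have hTA3 : T A3 = 0 := by simp [hT]
  have hTB1 : T B1 = 1 := by simp [hT, hB1A1.ne, hB1A2, hB1A3]
  have hTB2 : T B2 = 1 := by simp [hT, Ne.symm hA1B2, hB2A2.ne, hB2A3]
  have hTB3 : T B3 = 1 := by simp [hT, Ne.symm hA1B3, Ne.symm hA2B3, hB3A3.ne]
  have hKA1 : K A1 = d := by simp only [hK, htA1, hTA1, mul_one, add_zero]
  have hKB1 : K B1 = d + 1 := by simp only [hK, htB1, hTB1, mul_one]
  have hKA2 : K A2 = d * 2 := by simp only [hK, htA2, hTA2, add_zero]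
  have hKB2 : K B2 = d * 2 + 1 := by simp only [hK, htB2, hTB2]
  have hKA3 : K A3 = d * 3 := by simp only [hK, htA3, hTA3, add_zero]
  have hKB3 : K B3 = d * 3 + 1 := by simp only [hK, htB3, hTB3]
  have hKlb : ∀ (m : ℕ) (y : Fin d), m ≤ Stmt10Aux.ht r y → d * m ≤ K y := by
    intro m y hm
    have h1 : d * m ≤ d * Stmt10Aux.ht r y := Nat.mul_le_mul_left d hm
    simp only [hK]
    omega
  have hKub : ∀ (m : ℕ) (y : Fin d), Stmt10Aux.ht r y ≤ m → K y < d * (m + 1) := by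
    intro m y hm
    have h1 : d * Stmt10Aux.ht r y ≤ d * m := Nat.mul_le_mul_left d hm
    have h2 : T y < d := hTlt y
    have h3 : d * (m + 1) = d * m + d := by ring
    simp only [hK]
    omega
  have hKmono : ∀ u v : Fin d, Stmt10Aux.ht r u < Stmt10Aux.ht r v → K u < K v := by
    intro u v h
    have h1 := hKub (Stmt10Aux.ht r u) u (le_refl _)
    have h2 := hKlb (Stmt10Aux.ht r u + 1) v h
    omega
  have hKinj : Function.Injective K := by
    intro x y hxy
    have hht : Stmt10Aux.ht r x = Stmt10Aux.ht r y := by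
      by_contra hcon
      rcases Nat.lt_or_ge (Stmt10Aux.ht r x) (Stmt10Aux.ht r y) with h | h
      · have := hKmono x y h; omega
      · have h' : Stmt10Aux.ht r y < Stmt10Aux.ht r x := by omega
        have := hKmono y x h'; omega
    have hTeq : T x = T y := by
      simp only [hK] at hxy
      rw [hht] at hxy
      exact Nat.add_left_cancel hxy
    rcases Nat.lt_or_ge (Stmt10Aux.ht r x) 4 with h4 | h4
    · have hx6 := hcover x (by omega)
      have hy6 := hcover y (by omega)
      rcases hx6 with rfl | rfl | rfl | rfl | rfl | rfl <;>
        rcases hy6 with rfl | rfl | rfl | rfl | rfl | rfl <;>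
        first | rfl | omega
    · have h1 := Stmt10Aux.one_le_ht r x
      have hx6 : ¬(x = A1 ∨ x = B1 ∨ x = A2 ∨ x = B2 ∨ x = A3 ∨ x = B3) := by
        intro hc
        rcases hc with rfl | rfl | rfl | rfl | rfl | rfl <;> omega
      have hy6 : ¬(y = A1 ∨ y = B1 ∨ y = A2 ∨ y = B2 ∨ y = A3 ∨ y = B3) := by
        intro hc
        rcases hc with rfl | rfl | rfl | rfl | rfl | rfl <;> omega
      obtain ⟨n1, n2, n3, n4, n5, n6⟩ :
          x ≠ A1 ∧ x ≠ B1 ∧ x ≠ A2 ∧ x ≠ B2 ∧ x ≠ A3 ∧ x ≠ B3 := by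
        push_neg at hx6; exact hx6
      obtain ⟨m1, m2, m3, m4, m5, m6⟩ :
          y ≠ A1 ∧ y ≠ B1 ∧ y ≠ A2 ∧ y ≠ B2 ∧ y ≠ A3 ∧ y ≠ B3 := by
        push_neg at hy6; exact hy6
      have hTx : T x = (x : ℕ) := by simp [hT, n1, n2, n3, n4, n5, n6]
      have hTy : T y = (y : ℕ) := by simp [hT, m1, m2, m3, m4, m5, m6]
      exact Fin.ext (by omega)
  -- the six smallest key values
  have c0 : (Finset.univ.filter fun y => K y < K A1).card = 0 := by
    rw [Finset.card_eq_zero, Finset.filter_eq_empty_iff]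
    intro y _
    have h1 := hKlb 1 y (Stmt10Aux.one_le_ht r y)
    omega
  have c1 : (Finset.univ.filter fun y => K y < K B1).card = 1 := by
    have he : Finset.univ.filter (fun y => K y < K B1) = {A1} := by
      ext y
      simp only [Finset.mem_filter, Finset.mem_univ, true_and, Finset.mem_singleton]
      constructor
      · intro hy
        have h1 := hKlb 1 y (Stmt10Aux.one_le_ht r y)
        exact hKinj (show K y = K A1 by omega)
      · rintro rfl
        omega
    rw [he, Finset.card_singleton]
  have c2 : (Finset.univ.filter fun y => K y < K A2).card = 2 := by
    have he : Finset.univ.filter (fun y => K y < K A2) = {A1, B1} := by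
      ext y
      simp only [Finset.mem_filter, Finset.mem_univ, true_and, Finset.mem_insert,
        Finset.mem_singleton]
      constructor
      · intro hy
        have h2 : Stmt10Aux.ht r y = 1 := by
          have h1 := Stmt10Aux.one_le_ht r y
          by_contra hc
          have := hKlb 2 y (by omega)
          omega
        exact hlev1 y h2
      · rintro (rfl | rfl) <;> omega
    rw [he, Finset.card_insert_of_notMem (by simp [hB1A1.ne']), Finset.card_singleton]
  have c3 : (Finset.univ.filter fun y => K y < K B2).card = 3 := by
    have he : Finset.univ.filter (fun y => K y < K B2) = {A1, B1, A2} := by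
      ext y
      simp only [Finset.mem_filter, Finset.mem_univ, true_and, Finset.mem_insert,
        Finset.mem_singleton]
      constructor
      · intro hy
        have h1 := Stmt10Aux.one_le_ht r y
        have h2 : Stmt10Aux.ht r y ≤ 2 := by
          by_contra hc
          have := hKlb 3 y (by omega)
          omega
        rcases (by omega : Stmt10Aux.ht r y = 1 ∨ Stmt10Aux.ht r y = 2) with h | h
        · rcases hlev1 y h with rfl | rfl
          · exact Or.inl rfl
          · exact Or.inr (Or.inl rfl)
        · rcases hlev2 y h with rfl | rfl
          · exact Or.inr (Or.inr rfl)
          · omega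
      · rintro (rfl | rfl | rfl) <;> omega
    rw [he, Finset.card_insert_of_notMem (by simp [hB1A1.ne', hA1A2]),
      Finset.card_insert_of_notMem (by simp [hB1A2]), Finset.card_singleton]
  have c4 : (Finset.univ.filter fun y => K y < K A3).card = 4 := by
    have he : Finset.univ.filter (fun y => K y < K A3) = {A1, B1, A2, B2} := by
      ext y
      simp only [Finset.mem_filter, Finset.mem_univ, true_and, Finset.mem_insert,
        Finset.mem_singleton]
      constructor
      · intro hy
        have h1 := Stmt10Aux.one_le_ht r y
        have h2 : Stmt10Aux.ht r y ≤ 2 := by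
          by_contra hc
          have := hKlb 3 y (by omega)
          omega
        rcases (by omega : Stmt10Aux.ht r y = 1 ∨ Stmt10Aux.ht r y = 2) with h | h
        · rcases hlev1 y h with rfl | rfl
          · exact Or.inl rfl
          · exact Or.inr (Or.inl rfl)
        · rcases hlev2 y h with rfl | rfl
          · exact Or.inr (Or.inr (Or.inl rfl))
          · exact Or.inr (Or.inr (Or.inr rfl))
      · rintro (rfl | rfl | rfl | rfl) <;> omega
    rw [he, Finset.card_insert_of_notMem (by simp [hB1A1.ne', hA1A2, hA1B2]),
      Finset.card_insert_of_notMem (by simp [hB1A2, hB1B2]),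
      Finset.card_insert_of_notMem (by simp [hB2A2.ne']), Finset.card_singleton]
  have c5 : (Finset.univ.filter fun y => K y < K B3).card = 5 := by
    have he : Finset.univ.filter (fun y => K y < K B3) = {A1, B1, A2, B2, A3} := by
      ext y
      simp only [Finset.mem_filter, Finset.mem_univ, true_and, Finset.mem_insert,
        Finset.mem_singleton]
      constructor
      · intro hy
        have h1 := Stmt10Aux.one_le_ht r y
        have h2 : Stmt10Aux.ht r y ≤ 3 := by
          by_contra hc
          have := hKlb 4 y (by omega)
          omega
        rcases (by omega : Stmt10Aux.ht r y = 1 ∨ Stmt10Aux.ht r y = 2 ∨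
            Stmt10Aux.ht r y = 3) with h | h | h
        · rcases hlev1 y h with rfl | rfl
          · exact Or.inl rfl
          · exact Or.inr (Or.inl rfl)
        · rcases hlev2 y h with rfl | rfl
          · exact Or.inr (Or.inr (Or.inl rfl))
          · exact Or.inr (Or.inr (Or.inr (Or.inl rfl)))
        · rcases hlev3 y h with rfl | rfl
          · exact Or.inr (Or.inr (Or.inr (Or.inr rfl)))
          · omega
      · rintro (rfl | rfl | rfl | rfl | rfl) <;> omega
    rw [he, Finset.card_insert_of_notMem (by simp [hB1A1.ne', hA1A2, hA1B2, hA1A3]),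
      Finset.card_insert_of_notMem (by simp [hB1A2, hB1B2, hB1A3]),
      Finset.card_insert_of_notMem (by simp [hB2A2.ne', hA2A3]),
      Finset.card_insert_of_notMem (by simp [hB2A3]), Finset.card_singleton]
  -- the sorting permutation
  set σ := Tuple.sort K with hσ
  have p0 : ((σ.symm A1 : Fin d) : ℕ) = 0 := (sort_position K hKinj A1).trans c0
  have p1 : ((σ.symm B1 : Fin d) : ℕ) = 1 := (sort_position K hKinj B1).trans c1
  have p2 : ((σ.symm A2 : Fin d) : ℕ) = 2 := (sort_position K hKinj A2).trans c2
  have p3 : ((σ.symm B2 : Fin d) : ℕ) = 3 := (sort_position K hKinj B2).trans c3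
  have p4 : ((σ.symm A3 : Fin d) : ℕ) = 4 := (sort_position K hKinj A3).trans c4
  have p5 : ((σ.symm B3 : Fin d) : ℕ) = 5 := (sort_position K hKinj B3).trans c5
  have hd6 : 5 < d := p5 ▸ (σ.symm B3).isLt
  have hπ' : ∀ i x : Fin d, ((σ.symm x : Fin d) : ℕ) = (i : ℕ) → σ i = x := by
    intro i x hx
    have h : σ.symm x = i := Fin.ext hx
    rw [← h, σ.apply_symm_apply]
  have hlin : IsLinExt r σ := by
    intro a b hab
    have h1 : K (σ a) < K (σ b) :=
      hKmono _ _ (Stmt10Aux.ht_lt htrans hcompat hab)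
    by_contra h
    push_neg at h
    have h2 := Tuple.monotone_sort K h
    simp only [Function.comp_apply, ← hσ] at h2
    omega
  refine ⟨σ, hlin, ?_⟩
  have h0d : (0 : ℕ) < d := by omega
  have h2d : (2 : ℕ) < d := by omega
  have h4d : (4 : ℕ) < d := by omega
  have h1d : ((⟨0, h0d⟩ : Fin d) : ℕ) + 1 < d := by
    show (0 : ℕ) + 1 < d
    omega
  have h3d : ((⟨2, h2d⟩ : Fin d) : ℕ) + 1 < d := by
    show (2 : ℕ) + 1 < d
    omega
  have h5d : ((⟨4, h4d⟩ : Fin d) : ℕ) + 1 < d := by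
    show (4 : ℕ) + 1 < d
    omega
  set P : Fin d → Prop := fun j : Fin d =>
    ∃ hj : (j : ℕ) + 1 < d, σ ⟨(j : ℕ) + 1, hj⟩ < σ j with hP
  have m0 : P ⟨0, h0d⟩ := by
    refine ⟨h1d, ?_⟩
    have eA : σ ⟨0, h0d⟩ = A1 := hπ' _ _ p0
    have eB : σ ⟨((⟨0, h0d⟩ : Fin d) : ℕ) + 1, h1d⟩ = B1 := hπ' _ _ p1
    rw [eA, eB]
    exact hB1A1
  have m2 : P ⟨2, h2d⟩ := by
    refine ⟨h3d, ?_⟩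
    have eA : σ ⟨2, h2d⟩ = A2 := hπ' _ _ p2
    have eB : σ ⟨((⟨2, h2d⟩ : Fin d) : ℕ) + 1, h3d⟩ = B2 := hπ' _ _ p3
    rw [eA, eB]
    exact hB2A2
  have m4 : P ⟨4, h4d⟩ := by
    refine ⟨h5d, ?_⟩
    have eA : σ ⟨4, h4d⟩ = A3 := hπ' _ _ p4
    have eB : σ ⟨((⟨4, h4d⟩ : Fin d) : ℕ) + 1, h5d⟩ = B3 := hπ' _ _ p5
    rw [eA, eB]
    exact hB3A3
  have hsub : ({⟨0, h0d⟩, ⟨2, h2d⟩, ⟨4, h4d⟩} : Finset (Fin d)) ⊆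
      Finset.univ.filter P := by
    intro j hj
    simp only [Finset.mem_insert, Finset.mem_singleton] at hj
    rcases hj with rfl | rfl | rfl <;>
      exact Finset.mem_filter.mpr ⟨Finset.mem_univ _, by assumption⟩
  have hcard3 : ({⟨0, h0d⟩, ⟨2, h2d⟩, ⟨4, h4d⟩} : Finset (Fin d)).card = 3 := by
    rw [Finset.card_insert_of_notMem (by simp [Fin.ext_iff]),
      Finset.card_insert_of_notMem (by simp [Fin.ext_iff]), Finset.card_singleton]
  have := Finset.card_le_card hsub
  unfold descents
  simp only [← hP]
  omega
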